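/- Let p be a prime, n, m ≥ 1, and GR(p^n,m) = (ZMod (p^n))[X]/(f) for a monic basic irreducible f of degree m. Let T = {x ∈ GR(p^n,m) : x^{p^m} = x}. Then the restriction to T of the quotient map GR(p^n,m) → GR(p^n,m)/(p) is a bijection from T onto the residue field GR(p^n,m)/(p); in particular T has exactly p^m elements. -/

import Mathlib

private lemma gr_step {S : Type*} [CommRing S] {p : ℕ} (hp : p.Prime) {a b : S} {j : ℕ}
    (hj : 1 ≤ j) (h : a - b ∈ Ideal.span {(p : S)} ^ j) :
    a ^ p - b ^ p ∈ Ideal.span {(p : S)} ^ (j + 1) := by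
  set I : Ideal S := Ideal.span {(p : S)} with hI
  obtain ⟨d, hd, rfl⟩ : ∃ d, d ∈ I ^ j ∧ a = b + d := ⟨a - b, h, by ring⟩
  have hq := add_pow_prime_eq hp b d
  have hsum : (∑ k ∈ Finset.Ioo 0 p, b ^ k * d ^ (p - k) * ((p.choose k / p : ℕ) : S))
      ∈ I ^ j := by
    refine Ideal.sum_mem _ fun k hk => ?_
    rw [Finset.mem_Ioo] at hk
    have hdk : d ^ (p - k) ∈ I ^ j := by
      obtain ⟨t, ht⟩ : ∃ t, p - k = t + 1 := ⟨p - k - 1, by omega⟩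
      rw [ht, pow_succ]
      exact Ideal.mul_mem_left _ _ hd
    exact Ideal.mul_mem_right _ _ (Ideal.mul_mem_left _ _ hdk)
  have hdp : d ^ p ∈ I ^ (j + 1) := by
    have h2 : d * d ∈ I ^ (j + j) := by
      rw [pow_add]
      exact Ideal.mul_mem_mul hd hd
    have h3 : d * d ∈ I ^ (j + 1) := Ideal.pow_le_pow_right (by omega) h2
    have hpe : p = p - 2 + 2 := by have := hp.two_le; omega
    rw [hpe, pow_add d (p - 2) 2, pow_two]
    exact Ideal.mul_mem_left _ _ h3
  have hps : (p : S) * (∑ k ∈ Finset.Ioo 0 p, b ^ k * d ^ (p - k) * ((p.choose k / p : ℕ) : S))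
      ∈ I ^ (j + 1) := by
    rw [pow_succ']
    exact Ideal.mul_mem_mul (Ideal.mem_span_singleton_self _) hsum
  have : (b + d) ^ p - b ^ p
      = d ^ p + (p : S) * ∑ k ∈ Finset.Ioo 0 p, b ^ k * d ^ (p - k) * ((p.choose k / p : ℕ) : S) := by
    rw [hq]
    have hbd : b * d * ∑ k ∈ Finset.Ioo 0 p, b ^ (k - 1) * d ^ (p - k - 1) * ((p.choose k / p : ℕ) : S)
        = ∑ k ∈ Finset.Ioo 0 p, b ^ k * d ^ (p - k) * ((p.choose k / p : ℕ) : S) := by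
      rw [Finset.mul_sum]
      refine Finset.sum_congr rfl fun k hk => ?_
      rw [Finset.mem_Ioo] at hk
      obtain ⟨a, rfl⟩ : ∃ a, k = a + 1 := ⟨k - 1, by omega⟩
      obtain ⟨c, hc⟩ : ∃ c, p - (a + 1) = c + 1 := ⟨p - (a + 1) - 1, by omega⟩
      rw [hc]
      simp only [Nat.add_sub_cancel]
      ring
    linear_combination (p : S) * hbd
  rw [this]
  exact Ideal.add_mem _ hdp hps

private lemma gr_stepq {S : Type*} [CommRing S] {p m : ℕ} (hp : p.Prime) (hm : 0 < m)
    {a b : S} {j : ℕ} (hj : 1 ≤ j) (h : a - b ∈ Ideal.span {(p : S)} ^ j) :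
    a ^ p ^ m - b ^ p ^ m ∈ Ideal.span {(p : S)} ^ (j + 1) := by
  have h1 := gr_step hp hj h
  obtain ⟨c, hc⟩ := sub_dvd_pow_sub_pow (a ^ p) (b ^ p) (p ^ (m - 1))
  have hme : p ^ m = p * p ^ (m - 1) := by
    conv_lhs => rw [show m = 1 + (m - 1) by omega]
    rw [pow_add, pow_one]
  have ha : a ^ p ^ m = (a ^ p) ^ p ^ (m - 1) := by rw [← pow_mul, ← hme]
  have hb : b ^ p ^ m = (b ^ p) ^ p ^ (m - 1) := by rw [← pow_mul, ← hme]
  rw [ha, hb, hc]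
  exact Ideal.mul_mem_right c _ h1

/-- The quotient map `GR(p^n,m) → GR(p^n,m)/(p)` restricts to a bijection
from the Teichmüller set `T = {x : x ^ (p^m) = x}` onto the residue field; in particular `T`
has exactly `p ^ m` elements. -/
theorem galois_ring_teichmuller_bijection (p n m : ℕ) (hp : p.Prime) (hn : 0 < n) (hm : 0 < m)
    (f : Polynomial (ZMod (p ^ n))) (hf : f.Monic) (hdeg : f.natDegree = m)
    (hirr : Irreducible (f.map (ZMod.castHom (dvd_pow_self p hn.ne') (ZMod p)))) :
    Set.BijOn (Ideal.Quotient.mk (Ideal.span {(p : AdjoinRoot f)}))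
      {x : AdjoinRoot f | x ^ p ^ m = x} Set.univ ∧
    Set.ncard {x : AdjoinRoot f | x ^ p ^ m = x} = p ^ m := by
  haveI : Fact p.Prime := ⟨hp⟩
  set S := AdjoinRoot f
  set q := p ^ m with hq
  set I : Ideal S := Ideal.span {(p : S)} with hI
  set π := Ideal.Quotient.mk I with hπ
  set cast := ZMod.castHom (dvd_pow_self p hn.ne') (ZMod p) with hcast
  set g := f.map cast with hg
  -- p^n = 0 in S
  have hpn : (p : S) ^ n = 0 := by
    have h1 : (p : S) ^ n = ((p ^ n : ℕ) : S) := by push_cast; ring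
    have h2 : ((p ^ n : ℕ) : S) = AdjoinRoot.of f ((p ^ n : ℕ) : ZMod (p ^ n)) :=
      (map_natCast (AdjoinRoot.of f) (p ^ n)).symm
    rw [h1, h2, ZMod.natCast_self, map_zero]
  have hIn : I ^ n = ⊥ := by
    rw [hI, Ideal.span_singleton_pow, Ideal.span_singleton_eq_bot.mpr hpn]
  -- key: equal Teichmüller elements with equal residues are equal
  have key : ∀ x y : S, x ^ q = x → y ^ q = y → x - y ∈ I → x = y := by
    intro x y hx hy hxy
    have claim : ∀ k, x - y ∈ I ^ (k + 1) := by
      intro k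
      induction k with
      | zero => simpa using hxy
      | succ k ih =>
        have := gr_stepq hp hm (Nat.succ_le_succ (Nat.zero_le k)) ih
        rwa [← hq, hx, hy] at this
    have := claim (n - 1)
    rw [show n - 1 + 1 = n by omega, hIn, Ideal.mem_bot, sub_eq_zero] at this
    exact this
  -- build residue field equivalence
  set I₀ : Ideal (ZMod (p ^ n)) := Ideal.span {(p : ZMod (p ^ n))} with hI₀
  have hker : RingHom.ker (cast : ZMod (p ^ n) →+* ZMod p) = I₀ := by
    apply le_antisymm
    · intro x hx
      rw [RingHom.mem_ker] at hx
      have hval : cast x = ((x.val : ℕ) : ZMod p) := by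
        rw [hcast, ZMod.castHom_apply, ← ZMod.natCast_val]
      rw [hval, ZMod.natCast_eq_zero_iff] at hx
      obtain ⟨c, hc⟩ := hx
      rw [hI₀, Ideal.mem_span_singleton]
      refine ⟨(c : ZMod (p ^ n)), ?_⟩
      have : ((x.val : ℕ) : ZMod (p ^ n)) = x := by
        rw [ZMod.natCast_val, ZMod.cast_id]
      rw [← this, hc]
      push_cast
      ring
    · rw [hI₀, Ideal.span_le, Set.singleton_subset_iff, SetLike.mem_coe, RingHom.mem_ker,
        map_natCast, ZMod.natCast_self]
  have hsurj : Function.Surjective (cast : ZMod (p ^ n) →+* ZMod p) := by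
    intro y
    refine ⟨((y.val : ℕ) : ZMod (p ^ n)), ?_⟩
    rw [map_natCast, ZMod.natCast_val, ZMod.cast_id]
  have e0 : (ZMod (p ^ n) ⧸ I₀) ≃+* ZMod p :=
    (Ideal.quotEquivOfEq hker.symm).trans (RingHom.quotientKerEquivOfSurjective hsurj)
  have e1 : (S ⧸ I) ≃+* (S ⧸ I₀.map (AdjoinRoot.of f)) := by
    refine Ideal.quotEquivOfEq ?_
    rw [hI₀, Ideal.map_span, Set.image_singleton, map_natCast]
  have e2 := AdjoinRoot.quotAdjoinRootEquivQuotPolynomialQuot I₀ f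
  have hmapeq : (Ideal.span {f.map (Ideal.Quotient.mk I₀)}).map
      ((Polynomial.mapEquiv e0 : Polynomial (ZMod (p ^ n) ⧸ I₀) ≃+* Polynomial (ZMod p)) :
        Polynomial (ZMod (p ^ n) ⧸ I₀) →+* Polynomial (ZMod p)) = Ideal.span {g} := by
    rw [Ideal.map_span, Set.image_singleton]
    have heq : ((Polynomial.mapEquiv e0 :
        Polynomial (ZMod (p ^ n) ⧸ I₀) ≃+* Polynomial (ZMod p)) :
        Polynomial (ZMod (p ^ n) ⧸ I₀) →+* Polynomial (ZMod p)) (f.map (Ideal.Quotient.mk I₀))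
        = g := by
      simp only [RingEquiv.toRingHom_eq_coe, RingHom.coe_coe, Polynomial.mapEquiv_apply,
        Polynomial.map_map, hg]
      congr 1
      exact RingHom.ext_zmod _ _
    rw [heq]
  have e3 : (Polynomial (ZMod (p ^ n) ⧸ I₀) ⧸ Ideal.span {f.map (Ideal.Quotient.mk I₀)})
      ≃+* (Polynomial (ZMod p) ⧸ Ideal.span {g}) :=
    Ideal.quotientEquiv _ _ (Polynomial.mapEquiv e0) hmapeq.symm
  have e : (S ⧸ I) ≃+* AdjoinRoot g := e1.trans (e2.trans e3)
  -- AdjoinRoot g is a finite field of cardinality p ^ m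
  haveI : Fact (Irreducible g) := ⟨hirr⟩
  have hg0 : g ≠ 0 := (hf.map cast).ne_zero
  haveI : Module.Finite (ZMod p) (AdjoinRoot g) := (AdjoinRoot.powerBasis hg0).finite
  haveI : Finite (AdjoinRoot g) := Module.finite_of_finite (ZMod p)
  haveI : Fintype (AdjoinRoot g) := Fintype.ofFinite _
  have hdim : Module.finrank (ZMod p) (AdjoinRoot g) = m := by
    rw [(AdjoinRoot.powerBasis hg0).finrank, AdjoinRoot.powerBasis_dim, hg,
      hf.natDegree_map cast, hdeg]
  have hcard : Fintype.card (AdjoinRoot g) = p ^ m := by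
    rw [Module.card_eq_pow_finrank (K := ZMod p) (V := AdjoinRoot g), ZMod.card, hdim]
  -- every element of the residue field is fixed by x ↦ x^q
  have hfix : ∀ z : S ⧸ I, z ^ q = z := by
    intro z
    apply e.injective
    rw [map_pow, hq, ← hcard]
    exact FiniteField.pow_card (e z)
  have hfixj : ∀ (j : ℕ) (z : S ⧸ I), z ^ q ^ j = z := by
    intro j
    induction j with
    | zero => intro z; simp
    | succ j ih =>
      intro z
      rw [pow_succ, pow_mul, ih, hfix]
  -- the bijection
  have hbij : Set.BijOn π {x : S | x ^ q = x} Set.univ := by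
    refine ⟨fun x _ => trivial, ?_, ?_⟩
    · intro x hx y hy hxy
      exact key x y hx hy ((Ideal.Quotient.mk_eq_mk_iff_sub_mem x y).mp hxy)
    · intro z _
      obtain ⟨a, rfl⟩ := Ideal.Quotient.mk_surjective (I := I) z
      have ha : a ^ q - a ∈ I := by
        rw [← Ideal.Quotient.mk_eq_mk_iff_sub_mem, map_pow]
        exact hfix (π a)
      set x := a ^ q ^ (n - 1) with hx
      have claim : ∀ k, a ^ q ^ (k + 1) - a ^ q ^ k ∈ I ^ (k + 1) := by
        intro k
        induction k with
        | zero => simpa using ha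
        | succ k ih =>
          have h2 := gr_stepq hp hm (Nat.succ_le_succ (Nat.zero_le k)) ih
          have e1 : (a ^ q ^ (k + 1)) ^ p ^ m = a ^ q ^ (k + 2) := by
            rw [← pow_mul, ← hq, ← pow_succ]
          have e2 : (a ^ q ^ k) ^ p ^ m = a ^ q ^ (k + 1) := by
            rw [← pow_mul, ← hq, ← pow_succ]
          rw [e1, e2] at h2
          exact h2
      have hbot := claim (n - 1)
      rw [show n - 1 + 1 = n by omega, hIn, Ideal.mem_bot, sub_eq_zero] at hbot
      have hxq : x ^ q = x := by
        rw [hx, ← pow_mul, ← pow_succ, show n - 1 + 1 = n by omega]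
        exact hbot
      refine ⟨x, hxq, ?_⟩
      show π x = π a
      rw [hx, map_pow]
      exact hfixj (n - 1) (π a)
  refine ⟨hbij, ?_⟩
  have himg : π '' {x : S | x ^ q = x} = Set.univ := hbij.image_eq
  have h1 : ({x : S | x ^ q = x}).ncard = (Set.univ : Set (S ⧸ I)).ncard := by
    rw [← himg, Set.ncard_image_of_injOn hbij.injOn]
  rw [h1, Set.ncard_univ, Nat.card_congr e.toEquiv, Nat.card_eq_fintype_card, hcard]
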